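/- arXiv:2412.10790 — 2 statements merged into one kernel-verified Lean document; each statement's English description precedes it below -/
import Mathlib

section
/- With 𝔭, 𝔮 continuous positive functions on the torus summing to 1, if h(z) = 𝔭(z)/𝔮(R_α z) and a Borel probability measure μ satisfies the quasi-invariance equation R_{-α}^* μ = h μ (meaning ∫ φ d(R_{-α}^* μ) = ∫ φ h dμ for all continuous φ), then μ is a stationary measure for the Markov operator P, i.e. Pμ = μ. -/
open MeasureTheory

/-- The d-dimensional torus. -/
abbrev Td (d : ℕ) := Fin d → AddCircle (1 : ℝ)

/-- If `μ` solves the quasi-invariance equation `R_{-α}^* μ = (𝔭/(𝔮∘R_α)) μ`,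
then `μ` is a stationary measure for the EVP Markov operator `P`. -/
theorem stmt2 (d : ℕ) (α : Td d) (p q : C(Td d, ℝ))
    (hp : ∀ z, p z ∈ Set.Ioo (0 : ℝ) 1) (hq : ∀ z, q z ∈ Set.Ioo (0 : ℝ) 1)
    (hpq : ∀ z, p z + q z = 1)
    (μ : Measure (Td d)) [IsProbabilityMeasure μ]
    (hqi : ∀ φ : C(Td d, ℝ),
      ∫ z, φ z ∂(μ.map (· + (-α))) = ∫ z, φ z * (p z / q (z + α)) ∂μ) :
    (μ.withDensity fun z => ENNReal.ofReal (p z)).map (· + α) +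
      (μ.withDensity fun z => ENNReal.ofReal (q z)).map (· + (-α)) = μ := by
  classical
  have hq0 : ∀ z, q z ≠ 0 := fun z => ne_of_gt (hq z).1
  have hint : ∀ f : Td d → ℝ, Continuous f → Integrable f μ := fun f hf =>
    hf.integrable_of_hasCompactSupport (HasCompactSupport.of_compactSpace f)
  have hmeas_add : ∀ a : Td d, Measurable (fun z : Td d => z + a) :=
    fun a => (continuous_id.add continuous_const).measurable
  have hpmeas : Measurable fun z => ENNReal.ofReal (p z) :=
    (ENNReal.continuous_ofReal.comp p.continuous).measurable
  have hqmeas : Measurable fun z => ENNReal.ofReal (q z) :=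
    (ENNReal.continuous_ofReal.comp q.continuous).measurable
  have hfinp : IsFiniteMeasure (μ.withDensity fun z => ENNReal.ofReal (p z)) := by
    constructor
    rw [withDensity_apply _ MeasurableSet.univ, Measure.restrict_univ]
    calc ∫⁻ z, ENNReal.ofReal (p z) ∂μ ≤ ∫⁻ _, 1 ∂μ :=
          lintegral_mono fun z => ENNReal.ofReal_le_one.mpr (le_of_lt (hp z).2)
      _ < ⊤ := by simp
  have hfinq : IsFiniteMeasure (μ.withDensity fun z => ENNReal.ofReal (q z)) := by
    constructor
    rw [withDensity_apply _ MeasurableSet.univ, Measure.restrict_univ]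
    calc ∫⁻ z, ENNReal.ofReal (q z) ∂μ ≤ ∫⁻ _, 1 ∂μ :=
          lintegral_mono fun z => ENNReal.ofReal_le_one.mpr (le_of_lt (hq z).2)
      _ < ⊤ := by simp
  apply ext_of_forall_lintegral_eq_of_IsFiniteMeasure
  intro f
  have hfc : Continuous fun z => (f z : ℝ) := f.continuous.subtype_val
  have hfmeas : Measurable fun z : Td d => (f z : ENNReal) :=
    f.continuous.measurable.coe_nnreal_ennreal
  -- the two quasi-invariance consequences
  have key1 : ∫ z, (f z : ℝ) * q z ∂μ = ∫ z, (f (z + α) : ℝ) * p z ∂μ := by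
    have φcont : Continuous fun z : Td d => (f (z + α) : ℝ) * q (z + α) :=
      (hfc.comp (continuous_id.add continuous_const)).mul
        (q.continuous.comp (continuous_id.add continuous_const))
    have h := hqi ⟨_, φcont⟩
    simp only [ContinuousMap.coe_mk] at h
    rw [integral_map (hmeas_add (-α)).aemeasurable
        (φcont.aestronglyMeasurable)] at h
    simp only [add_assoc, neg_add_cancel, add_zero] at h
    rw [h]
    apply integral_congr_ae (Filter.Eventually.of_forall fun z => ?_)
    field_simp
    rw [mul_right_comm, mul_div_assoc, div_self (hq0 _), mul_one]
  have key2 : ∫ z, (f (z + -α) : ℝ) * q z ∂μ = ∫ z, (f z : ℝ) * p z ∂μ := by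
    have φcont : Continuous fun z : Td d => (f z : ℝ) * q (z + α) :=
      hfc.mul (q.continuous.comp (continuous_id.add continuous_const))
    have h := hqi ⟨_, φcont⟩
    simp only [ContinuousMap.coe_mk] at h
    rw [integral_map (hmeas_add (-α)).aemeasurable
        (φcont.aestronglyMeasurable)] at h
    simp only [add_assoc, neg_add_cancel, add_zero] at h
    rw [h]
    apply integral_congr_ae (Filter.Eventually.of_forall fun z => ?_)
    field_simp
    rw [mul_right_comm, mul_div_assoc, div_self (hq0 _), mul_one]
  -- now prove the lintegral identity
  rw [lintegral_add_measure,
    lintegral_map hfmeas (hmeas_add α), lintegral_map hfmeas (hmeas_add (-α)),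
    lintegral_withDensity_eq_lintegral_mul _ hpmeas
      (show Measurable fun a : Td d => (f (a + α) : ENNReal) from hfmeas.comp (hmeas_add α)),
    lintegral_withDensity_eq_lintegral_mul _ hqmeas
      (show Measurable fun a : Td d => (f (a + -α) : ENNReal) from hfmeas.comp (hmeas_add (-α)))]
  have e1 : ∫⁻ z, ((fun z => ENNReal.ofReal (p z)) * fun z => (f (z + α) : ENNReal)) z ∂μ
      = ENNReal.ofReal (∫ z, p z * (f (z + α) : ℝ) ∂μ) := by
    have hptw : ∀ z, ((fun z => ENNReal.ofReal (p z)) * fun z => (f (z + α) : ENNReal)) z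
        = ENNReal.ofReal (p z * (f (z + α) : ℝ)) := fun z => by
      rw [Pi.mul_apply, ← ENNReal.ofReal_coe_nnreal (p := f (z + α)),
        ← ENNReal.ofReal_mul (le_of_lt (hp z).1)]
    rw [lintegral_congr hptw,
      ← ofReal_integral_eq_lintegral_ofReal
        (hint (fun z => p z * (f (z + α) : ℝ))
          (by exact p.continuous.mul (hfc.comp (continuous_id.add continuous_const))))
        (Filter.Eventually.of_forall fun z =>
          mul_nonneg (le_of_lt (hp z).1) (f (z + α)).2)]
  have e2 : ∫⁻ z, ((fun z => ENNReal.ofReal (q z)) * fun z => (f (z + -α) : ENNReal)) z ∂μ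
      = ENNReal.ofReal (∫ z, q z * (f (z + -α) : ℝ) ∂μ) := by
    have hqtw : ∀ z, ((fun z => ENNReal.ofReal (q z)) * fun z => (f (z + -α) : ENNReal)) z
        = ENNReal.ofReal (q z * (f (z + -α) : ℝ)) := fun z => by
      rw [Pi.mul_apply, ← ENNReal.ofReal_coe_nnreal (p := f (z + -α)),
        ← ENNReal.ofReal_mul (le_of_lt (hq z).1)]
    rw [lintegral_congr hqtw,
      ← ofReal_integral_eq_lintegral_ofReal
        (hint (fun z => q z * (f (z + -α) : ℝ))
          (by exact q.continuous.mul (hfc.comp (continuous_id.add continuous_const))))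
        (Filter.Eventually.of_forall fun z =>
          mul_nonneg (le_of_lt (hq z).1) (f (z + -α)).2)]
  have e3 : ∫⁻ z, (f z : ENNReal) ∂μ = ENNReal.ofReal (∫ z, (f z : ℝ) ∂μ) := by
    rw [lintegral_congr (fun z : Td d => (ENNReal.ofReal_coe_nnreal (p := f z)).symm),
      ← ofReal_integral_eq_lintegral_ofReal (hint (fun z => (f z : ℝ)) hfc)
        (Filter.Eventually.of_forall fun z => (f z).2)]
  have hA' : (0:ℝ) ≤ ∫ z, p z * (f (z + α) : ℝ) ∂μ :=
    integral_nonneg fun z => mul_nonneg (le_of_lt (hp z).1) (f (z + α)).2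
  have hB' : (0:ℝ) ≤ ∫ z, q z * (f (z + -α) : ℝ) ∂μ :=
    integral_nonneg fun z => mul_nonneg (le_of_lt (hq z).1) (f (z + -α)).2
  rw [e1, e2, e3, ← ENNReal.ofReal_add hA' hB']
  congr 1
  have hA : ∫ z, p z * (f (z + α) : ℝ) ∂μ = ∫ z, (f z : ℝ) * q z ∂μ := by
    rw [key1]; apply integral_congr_ae (Filter.Eventually.of_forall fun z => mul_comm _ _)
  have hB : ∫ z, q z * (f (z + -α) : ℝ) ∂μ = ∫ z, (f z : ℝ) * p z ∂μ := by
    rw [← key2]; apply integral_congr_ae (Filter.Eventually.of_forall fun z => mul_comm _ _)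
  rw [hA, hB, ← integral_add (hint (fun z => (f z : ℝ) * q z) (hfc.mul q.continuous))
    (hint (fun z => (f z : ℝ) * p z) (hfc.mul p.continuous))]
  apply integral_congr_ae (Filter.Eventually.of_forall fun z => ?_)
  rw [← mul_add, add_comm (q z), hpq z, mul_one]
end

section
/- Let (X, F, P, σ) be an invertible ergodic measure-preserving system and ρ ∈ L¹(P) with ∫ ρ dP = 0. Then P(min_{1≤j≤n} S_{−j}ρ > 0) → 0 as n → ∞, where S_{−j}ρ(x) = ρ(σ^{-1}x) + ... + ρ(σ^{-j}x). -/
open MeasureTheory Filter Set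

/-- Key lemma (Atkinson/Kac-type recurrence): for an invertible ergodic system and an
integrable, measurable `g` with zero mean, the set where all forward Birkhoff sums of `g`
along `e.symm` are strictly positive is null. -/
theorem stmt13_key {X : Type*} [MeasurableSpace X] (P : Measure X) [IsProbabilityMeasure P]
    (e : X ≃ᵐ X) (herg : Ergodic (⇑e) P)
    (g : X → ℝ) (hgm : Measurable g) (hg : Integrable g P)
    (hmean : ∫ x, g x ∂P = 0) :
    P {x | ∀ n, 1 ≤ n → 0 < ∑ i ∈ Finset.range n, g ((⇑e.symm)^[i] x)} = 0 := by
  classical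
  set T : X → X := ⇑e.symm with hT
  have mpe : MeasurePreserving (⇑e) P P := herg.toMeasurePreserving
  have mpT : MeasurePreserving T P P := MeasurePreserving.symm e mpe
  have mpTk : ∀ k, MeasurePreserving (T^[k]) P P := fun k => mpT.iterate k
  have mpek : ∀ k, MeasurePreserving ((⇑e)^[k]) P P := fun k => mpe.iterate k
  have measTk : ∀ k, Measurable (T^[k]) := fun k => e.symm.measurable.iterate k
  have measek : ∀ k, Measurable ((⇑e)^[k]) := fun k => e.measurable.iterate k
  have embk : ∀ k, MeasurableEmbedding ((⇑e)^[k]) := by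
    intro k
    induction k with
    | zero => simpa using MeasurableEmbedding.id
    | succ n ih =>
        rw [Function.iterate_succ']
        exact e.measurableEmbedding.comp ih
  have cancel : ∀ (k : ℕ) (x : X), T^[k] ((⇑e)^[k] x) = x := fun k x =>
    (Function.LeftInverse.iterate e.symm_apply_apply k) x
  have cancel2 : ∀ (i l : ℕ) (x : X), i ≤ l → T^[i] ((⇑e)^[l] x) = (⇑e)^[l - i] x := by
    intro i l x h
    conv_lhs => rw [show l = i + (l - i) by omega, Function.iterate_add_apply]
    rw [cancel]
  set S : ℕ → X → ℝ := fun n x => ∑ i ∈ Finset.range n, g (T^[i] x) with hS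
  have hSmeas : ∀ n, Measurable (S n) := fun n =>
    Finset.measurable_sum _ fun i _ => hgm.comp (measTk i)
  set E : Set X := {x | ∀ n, 1 ≤ n → 0 < S n x} with hE
  have hEmeas : MeasurableSet E := by
    have : E = ⋂ n, ⋂ (_ : 1 ≤ n), {x | 0 < S n x} := by
      ext x; simp [hE]
    rw [this]
    exact MeasurableSet.iInter fun n => MeasurableSet.iInter fun _ =>
      measurableSet_lt measurable_const (hSmeas n)
  set B : ℕ → Set X := fun k => E ∩ {x | ∀ i, 1 ≤ i → i ≤ k → T^[i] x ∉ E} with hB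
  have hBsubE : ∀ k, B k ⊆ E := fun k => inter_subset_left
  have hBmeas : ∀ k, MeasurableSet (B k) := by
    intro k
    have : B k = E ∩ ⋂ i, ⋂ (_ : 1 ≤ i), ⋂ (_ : i ≤ k), T^[i] ⁻¹' Eᶜ := by
      ext x; simp [hB]
    rw [this]
    exact hEmeas.inter <| MeasurableSet.iInter fun i => MeasurableSet.iInter fun _ =>
      MeasurableSet.iInter fun _ => hEmeas.compl.preimage (measTk i)
  set A : ℕ → Set X := fun k => ((⇑e)^[k]) ⁻¹' B k with hA
  have hAmeas : ∀ k, MeasurableSet (A k) := fun k => (hBmeas k).preimage (measek k)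
  have hAmem : ∀ k y, y ∈ A k ↔
      ((⇑e)^[k] y ∈ E ∧ ∀ j, j < k → (⇑e)^[j] y ∉ E) := by
    intro k y
    simp only [hA, mem_preimage, hB, mem_inter_iff, mem_setOf_eq]
    constructor
    · rintro ⟨h1, h2⟩
      refine ⟨h1, fun j hj => ?_⟩
      have := h2 (k - j) (by omega) (by omega)
      rwa [cancel2 (k - j) k y (by omega), show k - (k - j) = j by omega] at this
    · rintro ⟨h1, h2⟩
      refine ⟨h1, fun i hi1 hik => ?_⟩
      rw [cancel2 i k y hik]
      exact h2 (k - i) (by omega)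
  have hAdisj : Pairwise (Function.onFun Disjoint A) := by
    have key : ∀ k l : ℕ, k < l → Disjoint (A k) (A l) := by
      intro k l hkl
      rw [Set.disjoint_left]
      intro y hyk hyl
      exact ((hAmem l y).1 hyl).2 k hkl ((hAmem k y).1 hyk).1
    intro k l hkl
    rcases lt_or_gt_of_ne hkl with h | h
    · exact key k l h
    · exact (key l k h).symm
  set U : Set X := ⋃ k, ((⇑e)^[k]) ⁻¹' E with hU
  have hUmeas : MeasurableSet U :=
    MeasurableSet.iUnion fun k => hEmeas.preimage (measek k)
  have hAU : (⋃ k, A k) = U := by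
    apply subset_antisymm
    · exact iUnion_mono fun k y hy => ((hAmem k y).1 hy).1
    · intro y hy
      rw [hU, mem_iUnion] at hy
      have hy' : ∃ k, (⇑e)^[k] y ∈ E := by simpa using hy
      refine mem_iUnion.2 ⟨Nat.find hy', (hAmem _ y).2 ⟨Nat.find_spec hy', ?_⟩⟩
      intro j hj hmem
      exact Nat.find_min hy' hj hmem
  have hint_g_Tk : ∀ k, Integrable (fun x => g (T^[k] x)) P := by
    intro k
    exact ((mpTk k).integrable_comp hg.aestronglyMeasurable).2 hg
  have hAint : ∀ k, ∫ x in A k, g x ∂P = ∫ x in B k, g (T^[k] x) ∂P := by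
    intro k
    have h1 := (mpek k).setIntegral_preimage_emb (embk k) (fun y => g (T^[k] y)) (B k)
    rw [← h1]
    exact integral_congr_ae (ae_of_all _ fun x => (congrArg g (cancel k x)).symm)
  set F : ℕ → X → ℝ := fun K x =>
    ∑ k ∈ Finset.range (K + 1), (B k).indicator (fun y => g (T^[k] y)) x with hF
  have hFmeas : ∀ K, Measurable (F K) := fun K =>
    Finset.measurable_sum _ fun k _ => (hgm.comp (measTk k)).indicator (hBmeas k)
  have hFint : ∀ K, Integrable (F K) P := fun K =>
    integrable_finset_sum _ fun k _ => ((hint_g_Tk k).indicator (hBmeas k))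
  have hFintegral : ∀ K, ∫ x, F K x ∂P = ∫ x in ⋃ k ∈ Finset.range (K + 1), A k, g x ∂P := by
    intro K
    rw [hF, integral_finset_sum _ fun k _ => ((hint_g_Tk k).indicator (hBmeas k)),
      integral_biUnion_finset _ (fun k _ => hAmeas k)
        (fun k _ l _ hkl => hAdisj hkl) (fun k _ => hg.integrableOn)]
    refine Finset.sum_congr rfl fun k _ => ?_
    rw [integral_indicator (hBmeas k), ← hAint k]
  -- pointwise structure of F on E
  have hBiff₁ : ∀ x ∈ E, ∀ (h : ∃ i, 1 ≤ i ∧ T^[i] x ∈ E) (k : ℕ),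
      x ∈ B k ↔ k < Nat.find h := by
    intro x hx h k
    constructor
    · intro hxB
      by_contra hlt
      push_neg at hlt
      exact hxB.2 (Nat.find h) (Nat.find_spec h).1 hlt (Nat.find_spec h).2
    · intro hk
      refine ⟨hx, fun i hi1 hik hmem => ?_⟩
      exact Nat.find_min h (by omega) ⟨hi1, hmem⟩
  have hBiff₂ : ∀ x ∈ E, (¬ ∃ i, 1 ≤ i ∧ T^[i] x ∈ E) → ∀ k, x ∈ B k := by
    intro x hx h k
    exact ⟨hx, fun i hi1 _ hmem => h ⟨i, hi1, hmem⟩⟩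
  have hFeq : ∀ x ∈ E, ∀ K : ℕ, ∃ m, 1 ≤ m ∧ m ≤ K + 1 ∧
      (∀ k ≤ K, (x ∈ B k ↔ k < m)) ∧
      (∀ (h : ∃ i, 1 ≤ i ∧ T^[i] x ∈ E), Nat.find h ≤ K + 1 → m = Nat.find h) := by
    intro x hx K
    by_cases h : ∃ i, 1 ≤ i ∧ T^[i] x ∈ E
    · refine ⟨min (K + 1) (Nat.find h), ?_, ?_, ?_, ?_⟩
      · have := (Nat.find_spec h).1; omega
      · omega
      · intro k hk
        rw [hBiff₁ x hx h k]
        omega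
      · intro h' hle
        have : Nat.find h' = Nat.find h := by
          congr
        omega
    · refine ⟨K + 1, by omega, le_refl _, fun k hk => ?_, fun h' _ => absurd h' h⟩
      simp only [iff_true_intro (hBiff₂ x hx h k), true_iff]
      omega
  have hFval : ∀ x ∈ E, ∀ (K m : ℕ), 1 ≤ m → m ≤ K + 1 →
      (∀ k ≤ K, (x ∈ B k ↔ k < m)) → F K x = S m x := by
    intro x hx K m hm1 hm2 hiff
    have step1 : F K x = ∑ k ∈ Finset.range (K + 1),
        (if k < m then g (T^[k] x) else 0) := by
      refine Finset.sum_congr rfl fun k hk => ?_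
      rw [Finset.mem_range] at hk
      by_cases hkm : k < m
      · rw [if_pos hkm, Set.indicator_of_mem ((hiff k (by omega)).2 hkm)]
      · rw [if_neg hkm,
          Set.indicator_of_notMem (fun hmem => hkm ((hiff k (by omega)).1 hmem))]
    rw [step1, ← Finset.sum_filter]
    have hfilter : (Finset.range (K + 1)).filter (· < m) = Finset.range m := by
      ext k
      simp only [Finset.mem_filter, Finset.mem_range]
      omega
    rw [hfilter]
  have hFnonneg : ∀ K x, 0 ≤ F K x := by
    intro K x
    by_cases hx : x ∈ E
    · obtain ⟨m, hm1, hm2, hiff, _⟩ := hFeq x hx K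
      rw [hFval x hx K m hm1 hm2 hiff]
      exact (hx m hm1).le
    · refine le_of_eq (Finset.sum_eq_zero fun k _ => ?_).symm
      exact Set.indicator_of_notMem (fun hmem => hx (hBsubE k hmem)) _
  -- main argument
  rcases eq_or_ne (P E) 0 with h0 | hPE
  · exact h0
  exfalso
  have hEU : E ⊆ U := by
    intro x hx
    exact mem_iUnion.2 ⟨0, by simpa using hx⟩
  have hUinv : (⇑e) ⁻¹' U ⊆ U := by
    intro y hy
    rw [mem_preimage, hU, mem_iUnion] at hy
    obtain ⟨k, hk⟩ := hy
    exact mem_iUnion.2 ⟨k + 1, by rwa [mem_preimage, Function.iterate_succ_apply]⟩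
  have hUfull : P U = 1 := by
    rcases herg.ae_empty_or_univ_of_preimage_ae_le hUmeas.nullMeasurableSet
        (HasSubset.Subset.eventuallyLE hUinv) with h | h
    · exact absurd (measure_mono_null hEU (by simpa using measure_congr h)) hPE
    · simpa using measure_congr h
  have hUc : P Uᶜ = 0 := (prob_compl_eq_zero_iff₀ hUmeas.nullMeasurableSet).2 hUfull
  have hUint : ∫ x in U, g x ∂P = 0 := by
    have hadd := integral_add_compl hUmeas hg
    have h2 : ∫ x in Uᶜ, g x ∂P = 0 := by
      rw [show P.restrict Uᶜ = 0 from Measure.restrict_eq_zero.mpr hUc, integral_zero_measure]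
    rw [hmean] at hadd
    linarith
  have htendsto : Tendsto (fun K => ∫ x, F K x ∂P) atTop (nhds 0) := by
    have hrw : ∀ K, ∫ x, F K x ∂P =
        ∫ x, (⋃ k ∈ Finset.range (K + 1), A k).indicator g x ∂P := by
      intro K
      rw [hFintegral K, integral_indicator
        (Finset.measurableSet_biUnion _ fun k _ => hAmeas k)]
    have hlim : ∫ x, U.indicator g x ∂P = 0 := by
      rw [integral_indicator hUmeas]; exact hUint
    rw [show (0 : ℝ) = ∫ x, U.indicator g x ∂P from hlim.symm]
    refine Tendsto.congr (fun K => (hrw K).symm) ?_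
    refine tendsto_integral_of_dominated_convergence (fun x => |g x|)
      (fun K => ((hgm.indicator
        (Finset.measurableSet_biUnion _ fun k _ => hAmeas k)).aestronglyMeasurable))
      hg.abs (fun K => ae_of_all _ fun x => ?_) (ae_of_all _ fun x => ?_)
    · rw [Real.norm_eq_abs]
      by_cases hx : x ∈ ⋃ k ∈ Finset.range (K + 1), A k
      · rw [Set.indicator_of_mem hx]
      · rw [Set.indicator_of_notMem hx, abs_zero]; exact abs_nonneg _
    · by_cases hx : x ∈ U
      · have hx' : x ∈ ⋃ k, A k := hAU ▸ hx
        obtain ⟨j, hj⟩ := mem_iUnion.1 hx'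
        rw [Set.indicator_of_mem hx]
        refine Tendsto.congr' ?_ tendsto_const_nhds
        filter_upwards [eventually_ge_atTop j] with K hK
        have hjK : j ∈ Finset.range (K + 1) := Finset.mem_range.2 (by omega)
        have : x ∈ ⋃ k ∈ Finset.range (K + 1), A k := Set.mem_iUnion₂.2 ⟨j, hjK, hj⟩
        rw [Set.indicator_of_mem this]
      · rw [Set.indicator_of_notMem hx]
        have : ∀ K, (⋃ k ∈ Finset.range (K + 1), A k).indicator g x = 0 := by
          intro K
          refine Set.indicator_of_notMem (fun hmem => hx ?_) _
          obtain ⟨k, _, hk⟩ := Set.mem_iUnion₂.1 hmem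
          exact hAU ▸ mem_iUnion.2 ⟨k, hk⟩
        simp only [this]
        exact tendsto_const_nhds
  have hlin : ∀ K, (∫⁻ x, ENNReal.ofReal (F K x) ∂P) = ENNReal.ofReal (∫ x, F K x ∂P) :=
    fun K => (ofReal_integral_eq_lintegral_ofReal (hFint K)
      (ae_of_all _ (hFnonneg K))).symm
  have hliminf0 : (∫⁻ x, Filter.liminf (fun K => ENNReal.ofReal (F K x)) atTop ∂P) = 0 := by
    apply le_antisymm _ zero_le
    refine le_trans (lintegral_liminf_le fun K => (hFmeas K).ennreal_ofReal) ?_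
    have htd : Tendsto (fun K => ∫⁻ x, ENNReal.ofReal (F K x) ∂P) atTop (nhds 0) := by
      simp_rw [hlin]
      have := ENNReal.tendsto_ofReal htendsto
      simpa using this
    rw [htd.liminf_eq]
  have hae0 : ∀ᵐ x ∂P, Filter.liminf (fun K => ENNReal.ofReal (F K x)) atTop = 0 := by
    have hmeasl : Measurable fun x => Filter.liminf (fun K => ENNReal.ofReal (F K x)) atTop :=
      Measurable.liminf fun K => (hFmeas K).ennreal_ofReal
    have := (lintegral_eq_zero_iff hmeasl).1 hliminf0
    filter_upwards [this] with x hx using hx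
  have hrec : ∀ᵐ x ∂P, x ∈ E → ∃ i, 1 ≤ i ∧ T^[i] x ∈ E := by
    have := mpT.conservative.ae_mem_imp_frequently_image_mem hEmeas.nullMeasurableSet
    filter_upwards [this] with x hx hxE
    obtain ⟨i, hi1, hmem⟩ := Filter.frequently_atTop.1 (hx hxE) 1
    exact ⟨i, hi1, hmem⟩
  have hfinal : ∀ᵐ x ∂P, x ∉ E := by
    filter_upwards [hae0, hrec] with x h0' hr hxE
    obtain h := hr hxE
    have hn₀1 : 1 ≤ Nat.find h := (Nat.find_spec h).1
    have hconst : ∀ K, Nat.find h ≤ K + 1 → F K x = S (Nat.find h) x := by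
      intro K hK
      obtain ⟨m, hm1, hm2, hiff, hmh⟩ := hFeq x hxE K
      rw [hFval x hxE K m hm1 hm2 hiff, hmh h hK]
    have hpos : 0 < S (Nat.find h) x := hxE (Nat.find h) hn₀1
    have hlim : Filter.liminf (fun K => ENNReal.ofReal (F K x)) atTop
        = ENNReal.ofReal (S (Nat.find h) x) := by
      apply Filter.Tendsto.liminf_eq
      refine Tendsto.congr' ?_ tendsto_const_nhds
      filter_upwards [eventually_ge_atTop (Nat.find h)] with K hK
      rw [hconst K (by omega)]
    rw [hlim] at h0'
    have := ENNReal.ofReal_eq_zero.1 h0'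
    linarith
  apply hPE
  have h := ae_iff.1 hfinal
  simpa only [not_not, Set.setOf_mem_eq] using h

/-- For an invertible ergodic measure-preserving system and `ρ ∈ L¹` with zero mean, the
probability that all backward Birkhoff sums `S_{-j}ρ`, `1 ≤ j ≤ n`, are strictly positive
tends to `0` as `n → ∞`. -/
theorem stmt13 {X : Type*} [MeasurableSpace X] (P : Measure X) [IsProbabilityMeasure P]
    (e : X ≃ᵐ X) (herg : Ergodic (⇑e) P)
    (ρ : X → ℝ) (hρ : Integrable ρ P) (hmean : ∫ x, ρ x ∂P = 0) :
    Tendsto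
      (fun n : ℕ => P {x | ∀ j ∈ Finset.Icc 1 n,
        0 < ∑ i ∈ Finset.range j, ρ ((⇑e.symm)^[i + 1] x)})
      atTop (nhds 0) := by
  classical
  set T : X → X := ⇑e.symm with hT
  have mpe : MeasurePreserving (⇑e) P P := herg.toMeasurePreserving
  have mpT : MeasurePreserving T P P := MeasurePreserving.symm e mpe
  have mpTk : ∀ k, MeasurePreserving (T^[k]) P P := fun k => mpT.iterate k
  -- measurable representative
  set ρ' : X → ℝ := hρ.1.mk ρ with hρ'
  have hρ'm : Measurable ρ' := hρ.1.stronglyMeasurable_mk.measurable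
  have hρae : ρ =ᵐ[P] ρ' := hρ.1.ae_eq_mk
  have hρ'int : Integrable ρ' P := hρ.congr hρae
  have hρ'mean : ∫ x, ρ' x ∂P = 0 := by
    rw [← integral_congr_ae hρae]; exact hmean
  set g : X → ℝ := fun x => ρ' (e.symm x) with hg
  have hgm : Measurable g := hρ'm.comp e.symm.measurable
  have hgint : Integrable g P := (mpT.integrable_comp_emb e.symm.measurableEmbedding).2 hρ'int
  have hgmean : ∫ x, g x ∂P = 0 := by
    have := mpT.integral_comp e.symm.measurableEmbedding ρ'
    rw [hg]
    exact this.trans hρ'mean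
  -- the measurable versions of the sets
  set C : ℕ → Set X := fun n => {x | ∀ j ∈ Finset.Icc 1 n,
    0 < ∑ i ∈ Finset.range j, ρ' ((⇑e.symm)^[i + 1] x)} with hC
  have hgiter : ∀ (i : ℕ) (x : X), g (T^[i] x) = ρ' (T^[i + 1] x) := by
    intro i x
    show ρ' (T (T^[i] x)) = ρ' (T^[i + 1] x)
    rw [← Function.iterate_succ_apply' T i x]
  have hCmeas : ∀ n, MeasurableSet (C n) := by
    intro n
    have : C n = ⋂ j ∈ Finset.Icc 1 n,
        {x | 0 < ∑ i ∈ Finset.range j, ρ' ((⇑e.symm)^[i + 1] x)} := by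
      ext x; simp [hC]
    rw [this]
    refine MeasurableSet.biInter (Finset.Icc 1 n).countable_toSet fun j _ => ?_
    exact measurableSet_lt measurable_const
      (Finset.measurable_sum _ fun i _ => hρ'm.comp (e.symm.measurable.iterate (i + 1)))
  have hCanti : Antitone C := by
    intro m n hmn x hx j hj
    rw [Finset.mem_Icc] at hj
    exact hx j (Finset.mem_Icc.2 ⟨hj.1, hj.2.trans hmn⟩)
  have hCiInter : (⋂ n, C n) =
      {x | ∀ n, 1 ≤ n → 0 < ∑ i ∈ Finset.range n, g ((⇑e.symm)^[i] x)} := by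
    ext x
    simp only [mem_iInter, hC, mem_setOf_eq, Finset.mem_Icc]
    constructor
    · intro h n hn
      have := h n n ⟨hn, le_refl n⟩
      refine lt_of_lt_of_eq this (Finset.sum_congr rfl fun i _ => ?_)
      rw [hgiter]
    · intro h n j hj
      have := h j hj.1
      refine lt_of_lt_of_eq this (Finset.sum_congr rfl fun i _ => ?_)
      rw [hgiter]
  have hCtendsto : Tendsto (fun n => P (C n)) atTop (nhds 0) := by
    have h0 : P (⋂ n, C n) = 0 := by
      rw [hCiInter]
      exact stmt13_key P e herg g hgm hgint hgmean
    have := tendsto_measure_iInter_atTop (μ := P) (s := C)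
      (fun n => (hCmeas n).nullMeasurableSet) hCanti ⟨0, measure_ne_top _ _⟩
    rw [h0] at this
    exact this
  -- compare the original sets with the measurable versions
  set Z : Set X := {x | ρ x ≠ ρ' x} with hZ
  have hZ0 : P Z = 0 := hρae
  set D : Set X := ⋃ i : ℕ, (T^[i + 1]) ⁻¹' Z with hD
  have hD0 : P D = 0 := by
    refine measure_iUnion_null fun i => ?_
    have hsub : (T^[i + 1]) ⁻¹' Z ⊆ (T^[i + 1]) ⁻¹' (toMeasurable P Z) :=
      fun x hx => subset_toMeasurable P Z hx
    refine measure_mono_null hsub ?_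
    rw [(mpTk (i + 1)).measure_preimage (measurableSet_toMeasurable P Z).nullMeasurableSet]
    rwa [measure_toMeasurable]
  have hsubset : ∀ n, {x | ∀ j ∈ Finset.Icc 1 n,
      0 < ∑ i ∈ Finset.range j, ρ ((⇑e.symm)^[i + 1] x)} ⊆ C n ∪ D := by
    intro n x hx
    by_cases hxD : x ∈ D
    · exact Or.inr hxD
    · refine Or.inl fun j hj => ?_
      have := hx j hj
      refine lt_of_lt_of_eq this (Finset.sum_congr rfl fun i _ => ?_)
      have : x ∉ (T^[i + 1]) ⁻¹' Z := fun h => hxD (mem_iUnion.2 ⟨i, h⟩)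
      simpa [hZ, not_not] using this
  have hle : ∀ n, P {x | ∀ j ∈ Finset.Icc 1 n,
      0 < ∑ i ∈ Finset.range j, ρ ((⇑e.symm)^[i + 1] x)} ≤ P (C n) := by
    intro n
    calc P {x | ∀ j ∈ Finset.Icc 1 n,
        0 < ∑ i ∈ Finset.range j, ρ ((⇑e.symm)^[i + 1] x)}
        ≤ P (C n ∪ D) := measure_mono (hsubset n)
      _ ≤ P (C n) + P D := measure_union_le _ _
      _ = P (C n) := by rw [hD0, add_zero]
  exact tendsto_of_tendsto_of_tendsto_of_le_of_le tendsto_const_nhds hCtendsto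
    (fun n => zero_le) hle
end
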